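/- Shorting and cutting laws for infinite networks: Let G be a network, let p ≠ q be vertices of G, and let S be any finite set of vertices containing p and q. Then R_short(p,q,S) ≤ odd_res(p,q) ≤ even_res(p,q) ≤ R_cut(p,q,S) (as elements of [0,∞]). -/
import Mathlib


open scoped ENNReal
open Filter

variable {V : Type*}

/-- A *flow* on a graph: an antisymmetric function on ordered pairs of vertices
that vanishes on non-adjacent pairs. -/
def IsFlow (G : SimpleGraph V) (θ : V → V → ℝ) : Prop :=
  (∀ u v, θ u v = -θ v u) ∧ ∀ u v, ¬G.Adj u v → θ u v = 0

/-- The divergence (source strength) of a flow at a vertex. -/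
noncomputable def divg (G : SimpleGraph V) [G.LocallyFinite] (θ : V → V → ℝ) (v : V) : ℝ :=
  ∑ u ∈ G.neighborFinset v, θ v u

/-- The energy `(1/2) ∑ r(u,v) θ(u,v)²` dissipated by a flow, valued in `[0,∞]`. -/
noncomputable def energy (r θ : V → V → ℝ) : ℝ≥0∞ :=
  2⁻¹ * ∑' p : V × V, ENNReal.ofReal (r p.1 p.2 * θ p.1 p.2 ^ 2)

open Classical in
/-- The source distribution with a unit source at `p` and a unit sink at `q`. -/
noncomputable def pointSource (p q v : V) : ℝ :=
  if v = p then 1 else if v = q then -1 else 0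

/-- The odd resistance: the infimum of the energy over all finite-energy unit
flows from `p` to `q`. -/
noncomputable def oddRes (G : SimpleGraph V) [G.LocallyFinite] (r : V → V → ℝ)
    (p q : V) : ℝ≥0∞ :=
  ⨅ (θ : V → V → ℝ) (_ : IsFlow G θ ∧ energy r θ ≠ ⊤ ∧ divg G θ = pointSource p q),
    energy r θ

/-- The cut resistance: the infimum of the energy over all unit flows from `p` to `q`
vanishing on every edge with an endpoint outside `S`. -/
noncomputable def cutRes (G : SimpleGraph V) [G.LocallyFinite] (r : V → V → ℝ)
    (p q : V) (S : Finset V) : ℝ≥0∞ :=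
  ⨅ (θ : V → V → ℝ) (_ : IsFlow G θ ∧ divg G θ = pointSource p q ∧
      ∀ u v, (u ∉ S ∨ v ∉ S) → θ u v = 0), energy r θ

/-- The even resistance: the infimum of the cut resistances over all finite
vertex sets containing `p` and `q`. -/
noncomputable def evenRes (G : SimpleGraph V) [G.LocallyFinite] (r : V → V → ℝ)
    (p q : V) : ℝ≥0∞ :=
  ⨅ (S : Finset V) (_ : p ∈ S ∧ q ∈ S), cutRes G r p q S

/-- The short resistance: the infimum of the energy over all antisymmetric edge
functions supported on edges with at least one endpoint in `S` whose divergence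
at every vertex of `S` is that of a unit flow from `p` to `q`. -/
noncomputable def shortRes (G : SimpleGraph V) [G.LocallyFinite] (r : V → V → ℝ)
    (p q : V) (S : Finset V) : ℝ≥0∞ :=
  ⨅ (θ : V → V → ℝ) (_ : (∀ u v, θ u v = -θ v u) ∧ (∀ u v, ¬G.Adj u v → θ u v = 0) ∧
      (∀ u v, u ∉ S → v ∉ S → θ u v = 0) ∧
      ∀ v ∈ S, divg G θ v = pointSource p q v), energy r θ

/-- A function on the vertices of a network is harmonic if the net current it
induces out of each vertex is zero. -/
def Harmonic (G : SimpleGraph V) [G.LocallyFinite] (r : V → V → ℝ) (u : V → ℝ) : Prop :=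
  ∀ v, ∑ w ∈ G.neighborFinset v, (u v - u w) / r v w = 0

open Classical in
/-- The Dirichlet energy `(1/2) ∑ (u(v)-u(w))²/r(v,w)` of a function on the vertices. -/
noncomputable def fnEnergy (G : SimpleGraph V) (r : V → V → ℝ) (u : V → ℝ) : ℝ≥0∞ :=
  2⁻¹ * ∑' p : V × V,
    if G.Adj p.1 p.2 then ENNReal.ofReal ((u p.1 - u p.2) ^ 2 / r p.1 p.2) else 0

/-- **Shorting and cutting laws for infinite networks.** For any finite vertex set `S`
containing `p` and `q`,
`R_short(p,q,S) ≤ odd_res(p,q) ≤ even_res(p,q) ≤ R_cut(p,q,S)`. -/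
theorem shorting_and_cutting_laws
    (G : SimpleGraph V) [G.LocallyFinite] (hG : G.Connected)
    (r : V → V → ℝ) (hr_pos : ∀ u v, G.Adj u v → 0 < r u v)
    (hr_symm : ∀ u v, r u v = r v u)
    (p q : V) (hpq : p ≠ q) (S : Finset V) (hp : p ∈ S) (hq : q ∈ S) :
    shortRes G r p q S ≤ oddRes G r p q ∧
      oddRes G r p q ≤ evenRes G r p q ∧
      evenRes G r p q ≤ cutRes G r p q S := by
  classical
  refine ⟨?_, ?_, ?_⟩
  · -- shortRes ≤ oddRes
    rw [oddRes]
    refine le_iInf₂ fun θ hθ => ?_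
    obtain ⟨⟨hanti, hsupp⟩, hE, hdiv⟩ := hθ
    set θ' : V → V → ℝ := fun u v => if u ∈ S ∨ v ∈ S then θ u v else 0 with hθ'
    refine le_trans (iInf₂_le θ' ?_) ?_
    · refine ⟨?_, ?_, ?_, ?_⟩
      · intro u v
        simp only [hθ', or_comm (a := v ∈ S)]
        split_ifs <;> simp [hanti u v]
      · intro u v h
        simp only [hθ']
        split_ifs <;> simp [hsupp u v h]
      · intro u v hu hv
        simp [hθ', hu, hv]
      · intro v hv
        have h1 : ∀ u ∈ G.neighborFinset v, θ' v u = θ v u := fun u _ => by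
          simp [hθ', hv]
        rw [divg, Finset.sum_congr rfl h1]
        exact congrFun hdiv v
    · unfold energy
      refine mul_le_mul_right (ENNReal.tsum_le_tsum fun pr => ?_) _
      by_cases h : pr.1 ∈ S ∨ pr.2 ∈ S
      · simp [hθ', h]
      · simp [hθ', if_neg h]
  · -- oddRes ≤ evenRes
    rw [evenRes]
    refine le_iInf₂ fun T hT => ?_
    rw [cutRes]
    refine le_iInf₂ fun θ hθ => ?_
    obtain ⟨hflow, hdiv, hvan⟩ := hθ
    rw [oddRes]
    refine iInf₂_le θ ⟨hflow, ?_, hdiv⟩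
    unfold energy
    have hsum : (∑' pr : V × V, ENNReal.ofReal (r pr.1 pr.2 * θ pr.1 pr.2 ^ 2)) =
        ∑ pr ∈ T ×ˢ T, ENNReal.ofReal (r pr.1 pr.2 * θ pr.1 pr.2 ^ 2) := by
      refine tsum_eq_sum fun pr hpr => ?_
      have h0 : θ pr.1 pr.2 = 0 := by
        by_cases h1 : pr.1 ∈ T
        · have h2 : pr.2 ∉ T := by
            simp only [Finset.mem_product, not_and_or] at hpr
            tauto
          exact hvan _ _ (Or.inr h2)
        · exact hvan _ _ (Or.inl h1)
      simp [h0]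
    rw [hsum]
    refine ENNReal.mul_ne_top (by simp) ?_
    exact (ENNReal.sum_lt_top.mpr fun _ _ => ENNReal.ofReal_lt_top).ne
  · -- evenRes ≤ cutRes
    rw [evenRes]
    exact iInf₂_le S ⟨hp, hq⟩
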